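/- arXiv:2212.00262 — 4 statements merged into one kernel-verified Lean document; each statement's English description precedes it below -/
import Mathlib

section
/- Let f(x,y,z) = C ×₁ f_{θx}(x) ×₂ f_{θy}(y) ×₃ f_{θz}(z) where C and the three depth-d MLPs satisfy: activation σ Lipschitz with constant κ and σ(0)=0, ‖C‖₁ ≤ η, and all weight matrices of ℓ₁-norm at most η. Then for any coordinate vectors x ∈ ℝ^{n₁}, y ∈ ℝ^{n₂}, z ∈ ℝ^{n₃} and the sampled tensor T(i,j,k) = f(x(i),y(j),z(k)), one has |T(i,j,k) − T(i-1,j,k)| ≤ δ|x(i) − x(i-1)| for all valid i,j,k, where δ = η^{3d+1}κ^{3d-3}ζ̃² and ζ̃ = max{‖x‖_∞, ‖y‖_∞, ‖z‖_∞}. -/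
/-- Hidden activations of an MLP applied to an input vector. -/
noncomputable def mlpAct (σ : ℝ → ℝ) (dims : ℕ → ℕ)
    (H : (k : ℕ) → Matrix (Fin (dims (k + 1))) (Fin (dims k)) ℝ) :
    (k : ℕ) → (Fin (dims 0) → ℝ) → (Fin (dims k) → ℝ)
  | 0, v => v
  | (k + 1), v => fun j => σ ((H k).mulVec (mlpAct σ dims H k v) j)

/-- Output of a depth-`d` MLP `H_d σ(H_{d-1} ⋯ σ(H₁ x))` on a scalar input. -/
noncomputable def mlpOut (σ : ℝ → ℝ) (dims : ℕ → ℕ)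
    (H : (k : ℕ) → Matrix (Fin (dims (k + 1))) (Fin (dims k)) ℝ)
    (d : ℕ) (x : ℝ) : Fin (dims ((d - 1) + 1)) → ℝ :=
  (H (d - 1)).mulVec (mlpAct σ dims H (d - 1) (fun _ => x))

lemma abs_mulVec_le' {p q : ℕ} (M : Matrix (Fin p) (Fin q) ℝ) (v : Fin q → ℝ)
    (η B : ℝ) (hM : ∑ i, ∑ j, |M i j| ≤ η) (hv : ∀ j, |v j| ≤ B) (hB : 0 ≤ B)
    (a : Fin p) : |M.mulVec v a| ≤ η * B := by
  have h1 : |M.mulVec v a| ≤ ∑ j, |M a j| * B := by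
    rw [Matrix.mulVec, dotProduct]
    refine (Finset.abs_sum_le_sum_abs _ _).trans (Finset.sum_le_sum fun j _ => ?_)
    rw [abs_mul]
    exact mul_le_mul_of_nonneg_left (hv j) (abs_nonneg _)
  have h2 : ∑ j, |M a j| ≤ η := le_trans
    (Finset.single_le_sum (f := fun i => ∑ j, |M i j|)
      (fun i _ => Finset.sum_nonneg fun j _ => abs_nonneg _) (Finset.mem_univ a)) hM
  calc |M.mulVec v a| ≤ ∑ j, |M a j| * B := h1
    _ = (∑ j, |M a j|) * B := (Finset.sum_mul _ _ _).symm
    _ ≤ η * B := mul_le_mul_of_nonneg_right h2 hB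

lemma mlpAct_lip (σ : ℝ → ℝ) (κ η : ℝ) (hσ : ∀ a b : ℝ, |σ a - σ b| ≤ κ * |a - b|)
    (dims : ℕ → ℕ) (H : (k : ℕ) → Matrix (Fin (dims (k + 1))) (Fin (dims k)) ℝ)
    (hη : 0 ≤ η)
    (v w : Fin (dims 0) → ℝ) (B : ℝ) (hvw : ∀ i, |v i - w i| ≤ B) (hB : 0 ≤ B)
    (k : ℕ) :
    ∀ (_ : ∀ m, m < k → ∑ i, ∑ j, |H m i j| ≤ η) (a : Fin (dims k)),
      |mlpAct σ dims H k v a - mlpAct σ dims H k w a| ≤ (κ * η) ^ k * B := by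
  induction k with
  | zero => intro _ a; simpa [mlpAct] using hvw a
  | succ k ih =>
    intro hH a
    have hκ : 0 ≤ κ := le_trans (abs_nonneg _) (by simpa using hσ 1 0)
    have ihk := ih (fun m hm => hH m (hm.trans (Nat.lt_succ_self k)))
    have hBk : 0 ≤ (κ * η) ^ k * B := mul_nonneg (pow_nonneg (mul_nonneg hκ hη) _) hB
    have hmv : |(H k).mulVec (mlpAct σ dims H k v) a
        - (H k).mulVec (mlpAct σ dims H k w) a| ≤ η * ((κ * η) ^ k * B) := by
      rw [show (H k).mulVec (mlpAct σ dims H k v) a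
          - (H k).mulVec (mlpAct σ dims H k w) a
          = (H k).mulVec (mlpAct σ dims H k v - mlpAct σ dims H k w) a by
        rw [Matrix.mulVec_sub]; rfl]
      exact abs_mulVec_le' _ _ _ _ (hH k (Nat.lt_succ_self k)) (fun j => ihk j) hBk a
    show |σ _ - σ _| ≤ _
    calc |σ ((H k).mulVec (mlpAct σ dims H k v) a)
          - σ ((H k).mulVec (mlpAct σ dims H k w) a)|
        ≤ κ * |(H k).mulVec (mlpAct σ dims H k v) a
          - (H k).mulVec (mlpAct σ dims H k w) a| := hσ _ _
      _ ≤ κ * (η * ((κ * η) ^ k * B)) := mul_le_mul_of_nonneg_left hmv hκ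
      _ = (κ * η) ^ (k + 1) * B := by ring

lemma mlpAct_zero' (σ : ℝ → ℝ) (hσ0 : σ 0 = 0) (dims : ℕ → ℕ)
    (H : (k : ℕ) → Matrix (Fin (dims (k + 1))) (Fin (dims k)) ℝ) (k : ℕ) :
    mlpAct σ dims H k (fun _ => (0 : ℝ)) = fun _ => 0 := by
  induction k with
  | zero => rfl
  | succ k ih =>
    funext a
    show σ ((H k).mulVec (mlpAct σ dims H k fun _ => 0) a) = 0
    rw [ih]
    have : (H k).mulVec (fun _ => (0 : ℝ)) = 0 := by
      have : (fun _ : Fin (dims k) => (0 : ℝ)) = 0 := rfl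
      rw [this, Matrix.mulVec_zero]
    rw [this]
    simpa using hσ0

lemma mlpOut_lip (σ : ℝ → ℝ) (κ η : ℝ) (hσ : ∀ a b : ℝ, |σ a - σ b| ≤ κ * |a - b|)
    (dims : ℕ → ℕ) (H : (k : ℕ) → Matrix (Fin (dims (k + 1))) (Fin (dims k)) ℝ)
    (hη : 0 ≤ η) (d : ℕ) (hH : ∀ m, m < d → ∑ i, ∑ j, |H m i j| ≤ η) (hd : 1 ≤ d)
    (s t : ℝ) (a : Fin (dims ((d - 1) + 1))) :
    |mlpOut σ dims H d s a - mlpOut σ dims H d t a|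
      ≤ η ^ d * κ ^ (d - 1) * |s - t| := by
  have hκ : 0 ≤ κ := le_trans (abs_nonneg _) (by simpa using hσ 1 0)
  have hact := mlpAct_lip σ κ η hσ dims H hη (fun _ => s) (fun _ => t) |s - t|
    (fun _ => le_refl _) (abs_nonneg _) (d - 1)
    (fun m hm => hH m (hm.trans_le (Nat.sub_le d 1)))
  have h := abs_mulVec_le' (H (d - 1)) _ η ((κ * η) ^ (d - 1) * |s - t|)
    (hH (d - 1) (Nat.sub_lt hd (by norm_num))) (fun j => hact j)
    (mul_nonneg (pow_nonneg (mul_nonneg hκ hη) _) (abs_nonneg _)) a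
  have heq : mlpOut σ dims H d s a - mlpOut σ dims H d t a
      = (H (d - 1)).mulVec (mlpAct σ dims H (d - 1) (fun _ => s)
          - mlpAct σ dims H (d - 1) (fun _ => t)) a := by
    rw [Matrix.mulVec_sub]; rfl
  rw [heq]
  calc |(H (d-1)).mulVec _ a| ≤ η * ((κ * η) ^ (d - 1) * |s - t|) := h
    _ = η ^ d * κ ^ (d - 1) * |s - t| := by
        obtain ⟨m, rfl⟩ : ∃ m, d = m + 1 := ⟨d - 1, (Nat.succ_pred_eq_of_pos hd).symm⟩
        simp only [Nat.add_sub_cancel]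
        rw [mul_pow, pow_succ]
        ring

lemma mlpOut_bound (σ : ℝ → ℝ) (κ η : ℝ) (hσ : ∀ a b : ℝ, |σ a - σ b| ≤ κ * |a - b|)
    (hσ0 : σ 0 = 0)
    (dims : ℕ → ℕ) (H : (k : ℕ) → Matrix (Fin (dims (k + 1))) (Fin (dims k)) ℝ)
    (hη : 0 ≤ η) (d : ℕ) (hH : ∀ m, m < d → ∑ i, ∑ j, |H m i j| ≤ η) (hd : 1 ≤ d)
    (t : ℝ) (a : Fin (dims ((d - 1) + 1))) :
    |mlpOut σ dims H d t a| ≤ η ^ d * κ ^ (d - 1) * |t| := by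
  have h := mlpOut_lip σ κ η hσ dims H hη d hH hd t 0 a
  have h0 : mlpOut σ dims H d 0 a = 0 := by
    unfold mlpOut
    rw [mlpAct_zero' σ hσ0]
    have : (fun _ : Fin (dims (d-1)) => (0 : ℝ)) = 0 := rfl
    rw [this, Matrix.mulVec_zero]
    rfl
  simpa [h0] using h
/-- smoothness of any tensor sampled from the LRTFR along mode 1. -/
theorem lrtfr_sampled_tensor_smoothness (σ : ℝ → ℝ) (κ η : ℝ) (d : ℕ) (hd : 1 ≤ d)
    (dx dy dz : ℕ → ℕ) (hdx : dx 0 = 1) (hdy : dy 0 = 1) (hdz : dz 0 = 1)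
    (Hx : (k : ℕ) → Matrix (Fin (dx (k + 1))) (Fin (dx k)) ℝ)
    (Hy : (k : ℕ) → Matrix (Fin (dy (k + 1))) (Fin (dy k)) ℝ)
    (Hz : (k : ℕ) → Matrix (Fin (dz (k + 1))) (Fin (dz k)) ℝ)
    (C : Fin (dx ((d - 1) + 1)) → Fin (dy ((d - 1) + 1)) → Fin (dz ((d - 1) + 1)) → ℝ)
    (hσ : ∀ a b : ℝ, |σ a - σ b| ≤ κ * |a - b|) (hσ0 : σ 0 = 0)
    (hC : ∑ a, ∑ b, ∑ c, |C a b c| ≤ η)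
    (hHx : ∀ k < d, ∑ i, ∑ j, |Hx k i j| ≤ η)
    (hHy : ∀ k < d, ∑ i, ∑ j, |Hy k i j| ≤ η)
    (hHz : ∀ k < d, ∑ i, ∑ j, |Hz k i j| ≤ η)
    (f : ℝ → ℝ → ℝ → ℝ)
    (hf : ∀ x y z, f x y z = ∑ a, ∑ b, ∑ c,
      C a b c * mlpOut σ dx Hx d x a * mlpOut σ dy Hy d y b * mlpOut σ dz Hz d z c)
    {n₁ n₂ n₃ : ℕ}
    (x : Fin (n₁ + 1) → ℝ) (y : Fin (n₂ + 1) → ℝ) (z : Fin (n₃ + 1) → ℝ)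
    (T : Fin (n₁ + 1) → Fin (n₂ + 1) → Fin (n₃ + 1) → ℝ)
    (hT : ∀ i j k, T i j k = f (x i) (y j) (z k))
    (ζ : ℝ) (hζ : ζ = max (⨆ i, |x i|) (max (⨆ j, |y j|) (⨆ k, |z k|)))
    (δ : ℝ) (hδ : δ = η ^ (3 * d + 1) * κ ^ (3 * d - 3) * ζ ^ 2) :
    ∀ (i : Fin n₁) (j : Fin (n₂ + 1)) (k : Fin (n₃ + 1)),
      |T i.succ j k - T i.castSucc j k| ≤ δ * |x i.succ - x i.castSucc| := by
  intro i j k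
  have hη : 0 ≤ η := le_trans
    (Finset.sum_nonneg fun a _ => Finset.sum_nonneg fun b _ => abs_nonneg _) (hHx 0 hd)
  have hκ : 0 ≤ κ := le_trans (abs_nonneg _) (by simpa using hσ 1 0)
  have hyb : ∀ j', |y j'| ≤ ζ := fun j' => by
    rw [hζ]
    exact le_trans (le_ciSup (f := fun t => |y t|) (Set.Finite.bddAbove (Set.finite_range _)) j')
      (le_max_of_le_right (le_max_left _ _))
  have hzb : ∀ k', |z k'| ≤ ζ := fun k' => by
    rw [hζ]
    exact le_trans (le_ciSup (f := fun t => |z t|) (Set.Finite.bddAbove (Set.finite_range _)) k')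
      (le_max_of_le_right (le_max_right _ _))
  have hζ0 : 0 ≤ ζ := le_trans (abs_nonneg _) (hyb j)
  set gx1 := mlpOut σ dx Hx d (x i.succ) with hgx1
  set gx0 := mlpOut σ dx Hx d (x i.castSucc) with hgx0
  set gy := mlpOut σ dy Hy d (y j) with hgyd
  set gz := mlpOut σ dz Hz d (z k) with hgzd
  set Δ := |x i.succ - x i.castSucc| with hΔ
  have hΔ0 : 0 ≤ Δ := abs_nonneg _
  set Bx : ℝ := η ^ d * κ ^ (d - 1) with hBx
  have hBx0 : 0 ≤ Bx := mul_nonneg (pow_nonneg hη _) (pow_nonneg hκ _)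
  have hdgx : ∀ a, |gx1 a - gx0 a| ≤ Bx * Δ := fun a =>
    mlpOut_lip σ κ η hσ dx Hx hη d (fun m hm => hHx m hm) hd _ _ a
  have hgy : ∀ b, |gy b| ≤ Bx * ζ := fun b =>
    le_trans (mlpOut_bound σ κ η hσ hσ0 dy Hy hη d (fun m hm => hHy m hm) hd _ b)
      (mul_le_mul_of_nonneg_left (hyb j) hBx0)
  have hgz : ∀ c, |gz c| ≤ Bx * ζ := fun c =>
    le_trans (mlpOut_bound σ κ η hσ hσ0 dz Hz hη d (fun m hm => hHz m hm) hd _ c)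
      (mul_le_mul_of_nonneg_left (hzb k) hBx0)
  have key : T i.succ j k - T i.castSucc j k
      = ∑ a, ∑ b, ∑ c, C a b c * ((gx1 a - gx0 a) * (gy b * gz c)) := by
    rw [hT, hT, hf, hf, ← Finset.sum_sub_distrib]
    refine Finset.sum_congr rfl fun a _ => ?_
    rw [← Finset.sum_sub_distrib]
    refine Finset.sum_congr rfl fun b _ => ?_
    rw [← Finset.sum_sub_distrib]
    refine Finset.sum_congr rfl fun c _ => ?_
    ring
  set K : ℝ := Bx * Δ * (Bx * ζ * (Bx * ζ)) with hK
  have hK0 : 0 ≤ K := mul_nonneg (mul_nonneg hBx0 hΔ0)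
    (mul_nonneg (mul_nonneg hBx0 hζ0) (mul_nonneg hBx0 hζ0))
  have hbound : |T i.succ j k - T i.castSucc j k|
      ≤ (∑ a, ∑ b, ∑ c, |C a b c|) * K := by
    rw [key]
    calc |∑ a, ∑ b, ∑ c, C a b c * ((gx1 a - gx0 a) * (gy b * gz c))|
        ≤ ∑ a, ∑ b, ∑ c, |C a b c * ((gx1 a - gx0 a) * (gy b * gz c))| := by
          refine (Finset.abs_sum_le_sum_abs _ _).trans (Finset.sum_le_sum fun a _ => ?_)
          refine (Finset.abs_sum_le_sum_abs _ _).trans (Finset.sum_le_sum fun b _ => ?_)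
          exact Finset.abs_sum_le_sum_abs _ _
      _ ≤ ∑ a, ∑ b, ∑ c, |C a b c| * K := by
          refine Finset.sum_le_sum fun a _ => Finset.sum_le_sum fun b _ =>
            Finset.sum_le_sum fun c _ => ?_
          rw [abs_mul, abs_mul, abs_mul]
          refine mul_le_mul_of_nonneg_left ?_ (abs_nonneg _)
          exact mul_le_mul (hdgx a)
            (mul_le_mul (hgy b) (hgz c) (abs_nonneg _) (mul_nonneg hBx0 hζ0))
            (mul_nonneg (abs_nonneg _) (abs_nonneg _)) (mul_nonneg hBx0 hΔ0)
      _ = (∑ a, ∑ b, ∑ c, |C a b c|) * K := by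
          simp [Finset.sum_mul]
  refine hbound.trans ?_
  have h2 : (∑ a, ∑ b, ∑ c, |C a b c|) * K ≤ η * K :=
    mul_le_mul_of_nonneg_right hC hK0
  refine h2.trans (le_of_eq ?_)
  rw [hδ, hK, hBx, hΔ]
  obtain ⟨m, rfl⟩ : ∃ m, d = m + 1 := ⟨d - 1, (Nat.succ_pred_eq_of_pos hd).symm⟩
  have e1 : 3 * (m + 1) + 1 = (m + 1) + ((m + 1) + ((m + 1) + 1)) := by ring
  have e2 : 3 * (m + 1) - 3 = m + (m + m) := by omega
  have e3 : (m + 1) - 1 = m := by omega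
  rw [e1, e2, e3, pow_add, pow_add, pow_add, pow_add, pow_add]
  ring
end

section
/- Let f : X_f × Y_f × Z_f → ℝ be a bounded function with X_f, Y_f, Z_f ⊂ ℝ, such that the supremum r₁ of rank(T^{(1)}) over all sampled tensors T ∈ S[f] is finite and attained by some tensor T sampled at coordinates x ∈ X_f^{n₁}, y ∈ Y_f^{n₂}, z ∈ Z_f^{n₃}. Then there exist indices (j₁,k₁),…,(j_{r₁},k_{r₁}) and a function c : Y_f × Z_f → ℝ^{r₁} such that for all (x₀,y₀,z₀) ∈ X_f × Y_f × Z_f: f(x₀,y₀,z₀) = Σ_{l=1}^{r₁} c(y₀,z₀)(l) · f(x₀, y(j_l), z(k_l)). -/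
open Submodule Set Module

/-- Auxiliary: if `w` is a linearly independent family of `r` vectors inside a set `S`
whose span has finrank at most `r`, then any further element of `S` lies in the span of `w`. -/
lemma aux_mem_span {m r : ℕ} (w : Fin r → (Fin m → ℝ)) (u : Fin m → ℝ)
    (S : Set (Fin m → ℝ)) (hw : ∀ l, w l ∈ S) (hu : u ∈ S)
    (hind : LinearIndependent ℝ w)
    (hrk : Module.finrank ℝ (Submodule.span ℝ S) ≤ r) :
    u ∈ Submodule.span ℝ (Set.range w) := by
  by_contra h
  have hind2 : LinearIndependent ℝ (Fin.snoc w u : Fin (r + 1) → (Fin m → ℝ)) :=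
    linearIndependent_fin_snoc.2 ⟨hind, h⟩
  have hle : Submodule.span ℝ (Set.range (Fin.snoc w u : Fin (r + 1) → (Fin m → ℝ)))
      ≤ Submodule.span ℝ S := by
    rw [Submodule.span_le]
    rintro _ ⟨i, rfl⟩
    refine Fin.lastCases ?_ (fun j => ?_) i
    · simpa using Submodule.subset_span hu
    · simpa using Submodule.subset_span (hw j)
  have h1 : Module.finrank ℝ
      (Submodule.span ℝ (Set.range (Fin.snoc w u : Fin (r + 1) → (Fin m → ℝ)))) = r + 1 := by
    rw [finrank_span_eq_card hind2, Fintype.card_fin]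
  have h2 := Submodule.finrank_mono hle
  omega

/-- mode-1 separation: every mode-1 fiber function of f lies in the
    span of r₁ fixed mode-1 basis functions, with coefficients depending on (y₀,z₀). -/
theorem mode1_separation (Xf Yf Zf : Set ℝ) (f : Xf → Yf → Zf → ℝ)
    (hbound : ∃ M : ℝ, ∀ a b c, |f a b c| ≤ M)
    (r₁ : ℕ) {n₁ n₂ n₃ : ℕ}
    (x : Fin n₁ → Xf) (y : Fin n₂ → Yf) (z : Fin n₃ → Zf)
    (hattain : Matrix.rank
      (Matrix.of fun i (p : Fin n₂ × Fin n₃) => f (x i) (y p.1) (z p.2)) = r₁)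
    (hsup : ∀ (m₁ m₂ m₃ : ℕ) (x' : Fin m₁ → Xf) (y' : Fin m₂ → Yf) (z' : Fin m₃ → Zf),
      Matrix.rank
        (Matrix.of fun i (p : Fin m₂ × Fin m₃) => f (x' i) (y' p.1) (z' p.2)) ≤ r₁) :
    ∃ (J : Fin r₁ → Fin n₂) (K : Fin r₁ → Fin n₃) (c : Yf → Zf → Fin r₁ → ℝ),
      ∀ (x₀ : Xf) (y₀ : Yf) (z₀ : Zf),
        f x₀ y₀ z₀ = ∑ l, c y₀ z₀ l * f x₀ (y (J l)) (z (K l)) := by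
  classical
  set g : Fin n₂ × Fin n₃ → (Fin n₁ → ℝ) := fun p i => f (x i) (y p.1) (z p.2) with hg
  have hrk : Module.finrank ℝ (Submodule.span ℝ (Set.range g)) = r₁ := by
    rw [← hattain, Matrix.rank_eq_finrank_span_cols]
    rfl
  obtain ⟨t, hts, htspan, htind⟩ := exists_linearIndependent ℝ (Set.range g)
  have htfin : t.Finite := (Set.finite_range g).subset hts
  haveI : Fintype t := htfin.fintype
  have hcardt : Fintype.card t = r₁ := by
    rw [← hrk, ← htspan, finrank_span_set_eq_card htind, Set.toFinset_card]
  let e : Fin r₁ ≃ t := (Fintype.equivFinOfCardEq hcardt).symm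
  have hpre : ∀ l : Fin r₁, ∃ p, g p = ((e l : t) : Fin n₁ → ℝ) := fun l => hts (e l).2
  choose p hp using hpre
  set J : Fin r₁ → Fin n₂ := fun l => (p l).1 with hJ
  set K : Fin r₁ → Fin n₃ := fun l => (p l).2 with hK
  set v : Fin r₁ → (Fin n₁ → ℝ) := fun l => g (p l) with hvdef
  have hv : ∀ l, v l = ((e l : t) : Fin n₁ → ℝ) := hp
  have hvind : LinearIndependent ℝ v := by
    have hveq : v = fun l => ((e l : t) : Fin n₁ → ℝ) := funext hv
    rw [hveq]
    exact htind.comp e e.injective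
  have key : ∀ (y₀ : Yf) (z₀ : Zf), ∃ c : Fin r₁ → ℝ,
      ∀ x₀ : Xf, f x₀ y₀ z₀ = ∑ l, c l * f x₀ (y (J l)) (z (K l)) := by
    intro y₀ z₀
    set y' : Fin (n₂ + 1) → Yf := Fin.snoc y y₀ with hy'
    set z' : Fin (n₃ + 1) → Zf := Fin.snoc z z₀ with hz'
    -- step A: coefficients from the original rows
    set G : Fin (n₂ + 1) × Fin (n₃ + 1) → (Fin n₁ → ℝ) :=
      fun q i => f (x i) (y' q.1) (z' q.2) with hG
    have hrkS : Module.finrank ℝ (Submodule.span ℝ (Set.range G)) ≤ r₁ := by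
      have h := hsup n₁ (n₂ + 1) (n₃ + 1) x y' z'
      rwa [Matrix.rank_eq_finrank_span_cols] at h
    have hwS : ∀ l, v l ∈ Set.range G := by
      intro l
      refine ⟨((J l).castSucc, (K l).castSucc), ?_⟩
      funext i
      simp [hG, hy', hz', hvdef, hg, hJ, hK]
    have huS : (fun i => f (x i) y₀ z₀) ∈ Set.range G := by
      refine ⟨(Fin.last _, Fin.last _), ?_⟩
      funext i
      simp [hG, hy', hz']
    have humem := aux_mem_span v _ _ hwS huS hvind hrkS
    obtain ⟨c, hc⟩ := (mem_span_range_iff_exists_fun ℝ).1 humem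
    refine ⟨c, fun x₀ => ?_⟩
    -- step B: add the row x₀
    set x'' : Fin (n₁ + 1) → Xf := Fin.snoc x x₀ with hx''
    set V : Fin r₁ → (Fin (n₁ + 1) → ℝ) :=
      fun l i => f (x'' i) (y (J l)) (z (K l)) with hV
    have hVrest : ∀ l (i : Fin n₁), V l i.castSucc = v l i := by
      intro l i; simp [hV, hx'', hvdef, hg, hJ, hK]
    have hVind : LinearIndependent ℝ V := by
      rw [Fintype.linearIndependent_iff]
      intro a ha
      apply Fintype.linearIndependent_iff.1 hvind a
      funext i
      have := congrFun ha i.castSucc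
      simpa [Finset.sum_apply, hVrest] using this
    set G2 : Fin (n₂ + 1) × Fin (n₃ + 1) → (Fin (n₁ + 1) → ℝ) :=
      fun q i => f (x'' i) (y' q.1) (z' q.2) with hG2
    have hrkS2 : Module.finrank ℝ (Submodule.span ℝ (Set.range G2)) ≤ r₁ := by
      have h := hsup (n₁ + 1) (n₂ + 1) (n₃ + 1) x'' y' z'
      rwa [Matrix.rank_eq_finrank_span_cols] at h
    have hwS2 : ∀ l, V l ∈ Set.range G2 := by
      intro l
      refine ⟨((J l).castSucc, (K l).castSucc), ?_⟩
      funext i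
      simp [hG2, hy', hz', hV]
    have huS2 : (fun i => f (x'' i) y₀ z₀) ∈ Set.range G2 := by
      refine ⟨(Fin.last _, Fin.last _), ?_⟩
      funext i
      simp [hG2, hy', hz']
    have humem2 := aux_mem_span V _ _ hwS2 huS2 hVind hrkS2
    obtain ⟨d, hd⟩ := (mem_span_range_iff_exists_fun ℝ).1 humem2
    have hdrest : ∑ l, d l • v l = (fun i => f (x i) y₀ z₀) := by
      funext i
      have := congrFun hd i.castSucc
      simpa [Finset.sum_apply, hVrest, hx''] using this
    have hcd : ∀ l, c l = d l := by
      have hzero : ∑ l, (c l - d l) • v l = 0 := by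
        simp only [sub_smul, Finset.sum_sub_distrib, hc, hdrest, sub_self]
      intro l
      have := Fintype.linearIndependent_iff.1 hvind (fun l => c l - d l) hzero l
      linarith
    have hlast := congrFun hd (Fin.last n₁)
    have hxlast : x'' (Fin.last n₁) = x₀ := by simp [hx'']
    calc f x₀ y₀ z₀ = ∑ l, d l * f x₀ (y (J l)) (z (K l)) := by
          rw [← hxlast]
          simpa [Finset.sum_apply, hV, smul_eq_mul] using hlast.symm
      _ = ∑ l, c l * f x₀ (y (J l)) (z (K l)) := by
          exact Finset.sum_congr rfl fun l _ => by rw [hcd l]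
  refine ⟨J, K, fun y₀ z₀ => (key y₀ z₀).choose, fun x₀ y₀ z₀ => (key y₀ z₀).choose_spec x₀⟩
end

section
/- Let f : X_f × Y_f × Z_f → ℝ be a bounded function with F-rank[f] = (r₁,r₂,r₃), all finite, where each supremum defining the F-rank is attained. Then there exist a tensor C ∈ ℝ^{r₁×r₂×r₃} and bounded functions f_x : X_f → ℝ^{r₁}, f_y : Y_f → ℝ^{r₂}, f_z : Z_f → ℝ^{r₃} such that f(v₁,v₂,v₃) = C ×₁ f_x(v₁) ×₂ f_y(v₂) ×₃ f_z(v₃) for every (v₁,v₂,v₃) ∈ X_f × Y_f × Z_f. -/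
open Matrix
set_option maxHeartbeats 4000000

private lemma my_rank_submatrix_le {ι κ ι' κ' : Type*} [Fintype ι] [Fintype κ]
    [Fintype ι'] [Fintype κ'] [DecidableEq ι] [DecidableEq κ]
    (A : Matrix ι κ ℝ) (f : ι' → ι) (g : κ' → κ) :
    (A.submatrix f g).rank ≤ A.rank := by
  have h : A.submatrix f g =
      (Matrix.of fun i j => if f i = j then (1:ℝ) else 0) * A *
        (Matrix.of fun i j => if i = g j then (1:ℝ) else 0) := by
    ext i j
    simp [Matrix.mul_apply, ite_mul, mul_ite, Finset.sum_ite_eq, Finset.sum_ite_eq']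
  rw [h]
  exact le_trans (Matrix.rank_mul_le_left _ _) (Matrix.rank_mul_le_right _ _)

private lemma my_col_pick {ι κ : Type*} [Fintype ι] [Fintype κ] {r : ℕ}
    (A : Matrix ι κ ℝ) (h : A.rank = r) :
    ∃ q : Fin r → κ, LinearIndependent ℝ (fun b => Aᵀ (q b)) := by
  obtain ⟨b, hbsub, hbspan, hbind⟩ := exists_linearIndependent ℝ (Set.range Aᵀ)
  have hbfin : b.Finite := (Set.finite_range Aᵀ).subset hbsub
  haveI : Fintype b := hbfin.fintype
  have hcard : Fintype.card b = r := by
    have h1 := finrank_span_set_eq_card hbind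
    rw [hbspan] at h1
    rw [Matrix.rank_eq_finrank_span_cols] at h
    rw [← Set.toFinset_card, ← h1, ← h]
    rfl
  let e : Fin r ≃ b := (Fintype.equivFinOfCardEq hcard).symm
  have hq : ∀ i : Fin r, ∃ k : κ, Aᵀ k = (e i : ι → ℝ) := fun i => hbsub (e i).2
  choose q hq using hq
  refine ⟨q, ?_⟩
  have : (fun i : Fin r => Aᵀ (q i)) = fun i => ((e i : ι → ℝ)) := funext fun i => hq i
  rw [this]
  exact hbind.comp e e.injective

private lemma my_rank_eq_of_li_cols {ι : Type*} [Fintype ι] {r : ℕ}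
    (B : Matrix ι (Fin r) ℝ) (h : LinearIndependent ℝ (fun j => Bᵀ j)) : B.rank = r := by
  rw [Matrix.rank_eq_finrank_span_cols]
  have := finrank_span_eq_card h
  exact this.trans (Fintype.card_fin r)

private lemma my_exists_sub {ι κ : Type*} [Fintype ι] [Fintype κ] [DecidableEq ι] [DecidableEq κ]
    {r : ℕ} (A : Matrix ι κ ℝ) (h : A.rank = r) :
    ∃ (p : Fin r → ι) (q : Fin r → κ), IsUnit (A.submatrix p q).det := by
  obtain ⟨q, hq⟩ := my_col_pick A h
  set B : Matrix ι (Fin r) ℝ := A.submatrix id q with hB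
  have hBrank : B.rank = r := by
    apply my_rank_eq_of_li_cols
    convert hq using 1
    rfl
  have hBt : Bᵀ.rank = r := by rw [Matrix.rank_transpose]; exact hBrank
  obtain ⟨p, hp⟩ := my_col_pick Bᵀ hBt
  have hGt : (Bᵀ.submatrix id p).rank = r := by
    apply my_rank_eq_of_li_cols
    convert hp using 1
    rfl
  set G : Matrix (Fin r) (Fin r) ℝ := A.submatrix p q with hGdef
  have hGeq : Gᵀ = Bᵀ.submatrix id p := by
    ext j a
    rfl
  have hGrank : G.rank = r := by
    rw [← Matrix.rank_transpose, hGeq, hGt]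
  have hsurj : Function.Surjective G.mulVec := by
    have hrange : LinearMap.range G.mulVecLin = ⊤ := by
      apply Submodule.eq_top_of_finrank_eq
      rw [show Module.finrank ℝ (LinearMap.range G.mulVecLin) = G.rank from rfl, hGrank]
      simp [Module.finrank_pi]
    intro v
    have := hrange ▸ LinearMap.mem_range (f := G.mulVecLin) (x := v)
    exact (this.symm.mpr trivial)
  have hU : IsUnit G := Matrix.mulVec_surjective_iff_isUnit.mp hsurj
  exact ⟨p, q, (Matrix.isUnit_iff_isUnit_det _).mp hU⟩

private lemma my_key {α β : Type} (F : α → β → ℝ) (M : ℝ) (hM : ∀ a b, |F a b| ≤ M) (r : ℕ)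
    (hle : ∀ (ι κ : Type) [Fintype ι] [Fintype κ] (x : ι → α) (c : κ → β),
      (Matrix.of fun i j => F (x i) (c j)).rank ≤ r)
    (hatt : ∃ (ι κ : Type) (_ : Fintype ι) (_ : Fintype κ) (x : ι → α) (c : κ → β),
      (Matrix.of fun i j => F (x i) (c j)).rank = r) :
    ∃ (u : Fin r → α) (g : α → Fin r → ℝ) (M' : ℝ),
      (∀ v a, |g v a| ≤ M') ∧ ∀ v b, F v b = ∑ a, g v a * F (u a) b := by
  classical
  obtain ⟨ι, κ, _, _, x, c, hr⟩ := hatt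
  obtain ⟨p, q, hdet⟩ := my_exists_sub _ hr
  let u : Fin r → α := fun a => x (p a)
  let w : Fin r → β := fun b => c (q b)
  let G : Matrix (Fin r) (Fin r) ℝ := Matrix.of fun a b => F (u a) (w b)
  have hdetG : IsUnit G.det := hdet
  haveI : Invertible G := G.invertibleOfIsUnitDet hdetG
  refine ⟨u, fun v a => ∑ b, F v (w b) * G⁻¹ b a, ∑ a, ∑ b, |M| * |G⁻¹ b a|, ?_, ?_⟩
  · intro v a
    have h1 : |∑ b, F v (w b) * G⁻¹ b a| ≤ ∑ b, |M| * |G⁻¹ b a| := by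
      refine le_trans (Finset.abs_sum_le_sum_abs _ _) (Finset.sum_le_sum fun b _ => ?_)
      rw [abs_mul]
      exact mul_le_mul_of_nonneg_right ((hM v (w b)).trans (le_abs_self M)) (abs_nonneg _)
    exact h1.trans (Finset.single_le_sum (f := fun a => ∑ b, |M| * |G⁻¹ b a|)
      (fun i _ => Finset.sum_nonneg fun b _ => mul_nonneg (abs_nonneg _) (abs_nonneg _))
      (Finset.mem_univ a))
  · intro v b₀
    let Bc : Matrix (Fin r) (Fin 1) ℝ := Matrix.of fun a _ => F (u a) b₀
    let Cr : Matrix (Fin 1) (Fin r) ℝ := Matrix.of fun _ b => F v (w b)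
    let Dd : Matrix (Fin 1) (Fin 1) ℝ := Matrix.of fun _ _ => F v b₀
    have hdet0 : (Matrix.fromBlocks G Bc Cr Dd).det = 0 := by
      by_contra hne
      have hU : IsUnit (Matrix.fromBlocks G Bc Cr Dd) :=
        (Matrix.isUnit_iff_isUnit_det _).mpr (isUnit_iff_ne_zero.mpr hne)
      have h2 := Matrix.rank_of_isUnit _ hU
      have h3 : (Matrix.fromBlocks G Bc Cr Dd).rank ≤ r := by
        have heq : Matrix.fromBlocks G Bc Cr Dd =
            Matrix.of fun i j => F (Sum.elim u (fun _ => v) i) (Sum.elim w (fun _ => b₀) j) := by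
          ext i j
          rcases i with i | i <;> rcases j with j | j <;> rfl
        rw [heq]
        exact hle _ _ _ _
      simp only [Fintype.card_sum, Fintype.card_fin] at h2
      omega
    rw [Matrix.det_fromBlocks₁₁] at hdet0
    have hG0 : G.det ≠ 0 := hdetG.ne_zero
    have h5 : (Dd - Cr * ⅟G * Bc).det = 0 := by
      rcases mul_eq_zero.mp hdet0 with h | h
      · exact absurd h hG0
      · exact h
    rw [Matrix.det_fin_one, Matrix.sub_apply] at h5
    have h6 : Dd 0 0 = (Cr * ⅟G * Bc) 0 0 := by linarith
    have h7 : (⅟G : Matrix (Fin r) (Fin r) ℝ) = G⁻¹ := Matrix.invOf_eq_nonsing_inv G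
    calc F v b₀ = Dd 0 0 := rfl
      _ = (Cr * ⅟G * Bc) 0 0 := h6
      _ = ∑ a, (∑ b, F v (w b) * G⁻¹ b a) * F (u a) b₀ := by
          rw [h7]
          simp only [Matrix.mul_apply]
          rfl


/-- low-rank tensor function factorization: a bounded function whose
    F-rank (r₁,r₂,r₃) is finite and attained factorizes as C ×₁ f_x ×₂ f_y ×₃ f_z. -/
theorem lowrank_tensor_function_factorization
    (Xf Yf Zf : Set ℝ) (f : Xf → Yf → Zf → ℝ)
    (hbound : ∃ M : ℝ, ∀ a b c, |f a b c| ≤ M)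
    (r₁ r₂ r₃ : ℕ)
    (hsup1 : ∀ (m₁ m₂ m₃ : ℕ) (x : Fin m₁ → Xf) (y : Fin m₂ → Yf) (z : Fin m₃ → Zf),
      Matrix.rank (Matrix.of fun i (p : Fin m₂ × Fin m₃) => f (x i) (y p.1) (z p.2)) ≤ r₁)
    (hatt1 : ∃ (m₁ m₂ m₃ : ℕ) (x : Fin m₁ → Xf) (y : Fin m₂ → Yf) (z : Fin m₃ → Zf),
      Matrix.rank (Matrix.of fun i (p : Fin m₂ × Fin m₃) => f (x i) (y p.1) (z p.2)) = r₁)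
    (hsup2 : ∀ (m₁ m₂ m₃ : ℕ) (x : Fin m₁ → Xf) (y : Fin m₂ → Yf) (z : Fin m₃ → Zf),
      Matrix.rank (Matrix.of fun j (p : Fin m₁ × Fin m₃) => f (x p.1) (y j) (z p.2)) ≤ r₂)
    (hatt2 : ∃ (m₁ m₂ m₃ : ℕ) (x : Fin m₁ → Xf) (y : Fin m₂ → Yf) (z : Fin m₃ → Zf),
      Matrix.rank (Matrix.of fun j (p : Fin m₁ × Fin m₃) => f (x p.1) (y j) (z p.2)) = r₂)
    (hsup3 : ∀ (m₁ m₂ m₃ : ℕ) (x : Fin m₁ → Xf) (y : Fin m₂ → Yf) (z : Fin m₃ → Zf),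
      Matrix.rank (Matrix.of fun k (p : Fin m₁ × Fin m₂) => f (x p.1) (y p.2) (z k)) ≤ r₃)
    (hatt3 : ∃ (m₁ m₂ m₃ : ℕ) (x : Fin m₁ → Xf) (y : Fin m₂ → Yf) (z : Fin m₃ → Zf),
      Matrix.rank (Matrix.of fun k (p : Fin m₁ × Fin m₂) => f (x p.1) (y p.2) (z k)) = r₃) :
    ∃ (C : Fin r₁ → Fin r₂ → Fin r₃ → ℝ)
      (fx : Xf → Fin r₁ → ℝ) (fy : Yf → Fin r₂ → ℝ) (fz : Zf → Fin r₃ → ℝ),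
      (∃ M : ℝ, ∀ v a, |fx v a| ≤ M) ∧
      (∃ M : ℝ, ∀ v b, |fy v b| ≤ M) ∧
      (∃ M : ℝ, ∀ v c, |fz v c| ≤ M) ∧
      ∀ (v₁ : Xf) (v₂ : Yf) (v₃ : Zf),
        f v₁ v₂ v₃ = ∑ a, ∑ b, ∑ c, C a b c * fx v₁ a * fy v₂ b * fz v₃ c := by
  classical
  obtain ⟨M, hM⟩ := hbound
  -- mode 1
  have hle1 : ∀ (ι κ : Type) [Fintype ι] [Fintype κ] (x : ι → Xf) (c : κ → Yf × Zf),
      (Matrix.of fun i j => (fun (v : Xf) (b : Yf × Zf) => f v b.1 b.2) (x i) (c j)).rank ≤ r₁ := by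
    intro ι κ _ _ x c
    let e := Fintype.equivFin ι
    let e' := Fintype.equivFin κ
    have heq : (Matrix.of fun i j => (fun (v : Xf) (b : Yf × Zf) => f v b.1 b.2) (x i) (c j)) =
        (Matrix.of fun i (pp : Fin (Fintype.card κ) × Fin (Fintype.card κ)) =>
          f (x (e.symm i)) ((c (e'.symm pp.1)).1) ((c (e'.symm pp.2)).2)).submatrix
            e (fun j => (e' j, e' j)) := by
      ext i j
      simp only [Matrix.submatrix_apply, Matrix.of_apply, Equiv.symm_apply_apply]
    rw [heq]
    refine le_trans (my_rank_submatrix_le _ e (fun j => (e' j, e' j)))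
      (hsup1 (Fintype.card ι) (Fintype.card κ) (Fintype.card κ)
        (fun i => x (e.symm i)) (fun k => (c (e'.symm k)).1) (fun k => (c (e'.symm k)).2))
  have hatt1' : ∃ (ι κ : Type) (_ : Fintype ι) (_ : Fintype κ) (x : ι → Xf) (c : κ → Yf × Zf),
      (Matrix.of fun i j => (fun (v : Xf) (b : Yf × Zf) => f v b.1 b.2) (x i) (c j)).rank = r₁ := by
    obtain ⟨m₁, m₂, m₃, x, y, z, h⟩ := hatt1
    exact ⟨Fin m₁, Fin m₂ × Fin m₃, inferInstance, inferInstance, x,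
      fun pp => (y pp.1, z pp.2), h⟩
  obtain ⟨u₁, g₁, M₁, hb₁, h₁⟩ := my_key (fun (v : Xf) (b : Yf × Zf) => f v b.1 b.2) M
    (fun a b => hM a b.1 b.2) r₁ hle1 hatt1'
  -- mode 2
  have hle2 : ∀ (ι κ : Type) [Fintype ι] [Fintype κ] (x : ι → Yf) (c : κ → Xf × Zf),
      (Matrix.of fun i j => (fun (v : Yf) (b : Xf × Zf) => f b.1 v b.2) (x i) (c j)).rank ≤ r₂ := by
    intro ι κ _ _ x c
    let e := Fintype.equivFin ι
    let e' := Fintype.equivFin κ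
    have heq : (Matrix.of fun i j => (fun (v : Yf) (b : Xf × Zf) => f b.1 v b.2) (x i) (c j)) =
        (Matrix.of fun i (pp : Fin (Fintype.card κ) × Fin (Fintype.card κ)) =>
          f ((c (e'.symm pp.1)).1) (x (e.symm i)) ((c (e'.symm pp.2)).2)).submatrix
            e (fun j => (e' j, e' j)) := by
      ext i j
      simp only [Matrix.submatrix_apply, Matrix.of_apply, Equiv.symm_apply_apply]
    rw [heq]
    refine le_trans (my_rank_submatrix_le _ e (fun j => (e' j, e' j)))
      (hsup2 (Fintype.card κ) (Fintype.card ι) (Fintype.card κ)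
        (fun k => (c (e'.symm k)).1) (fun i => x (e.symm i)) (fun k => (c (e'.symm k)).2))
  have hatt2' : ∃ (ι κ : Type) (_ : Fintype ι) (_ : Fintype κ) (x : ι → Yf) (c : κ → Xf × Zf),
      (Matrix.of fun i j => (fun (v : Yf) (b : Xf × Zf) => f b.1 v b.2) (x i) (c j)).rank = r₂ := by
    obtain ⟨m₁, m₂, m₃, x, y, z, h⟩ := hatt2
    exact ⟨Fin m₂, Fin m₁ × Fin m₃, inferInstance, inferInstance, y,
      fun pp => (x pp.1, z pp.2), h⟩
  obtain ⟨u₂, g₂, M₂, hb₂, h₂⟩ := my_key (fun (v : Yf) (b : Xf × Zf) => f b.1 v b.2) M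
    (fun a b => hM b.1 a b.2) r₂ hle2 hatt2'
  -- mode 3
  have hle3 : ∀ (ι κ : Type) [Fintype ι] [Fintype κ] (x : ι → Zf) (c : κ → Xf × Yf),
      (Matrix.of fun i j => (fun (v : Zf) (b : Xf × Yf) => f b.1 b.2 v) (x i) (c j)).rank ≤ r₃ := by
    intro ι κ _ _ x c
    let e := Fintype.equivFin ι
    let e' := Fintype.equivFin κ
    have heq : (Matrix.of fun i j => (fun (v : Zf) (b : Xf × Yf) => f b.1 b.2 v) (x i) (c j)) =
        (Matrix.of fun i (pp : Fin (Fintype.card κ) × Fin (Fintype.card κ)) =>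
          f ((c (e'.symm pp.1)).1) ((c (e'.symm pp.2)).2) (x (e.symm i))).submatrix
            e (fun j => (e' j, e' j)) := by
      ext i j
      simp only [Matrix.submatrix_apply, Matrix.of_apply, Equiv.symm_apply_apply]
    rw [heq]
    refine le_trans (my_rank_submatrix_le _ e (fun j => (e' j, e' j)))
      (hsup3 (Fintype.card κ) (Fintype.card κ) (Fintype.card ι)
        (fun k => (c (e'.symm k)).1) (fun k => (c (e'.symm k)).2) (fun i => x (e.symm i)))
  have hatt3' : ∃ (ι κ : Type) (_ : Fintype ι) (_ : Fintype κ) (x : ι → Zf) (c : κ → Xf × Yf),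
      (Matrix.of fun i j => (fun (v : Zf) (b : Xf × Yf) => f b.1 b.2 v) (x i) (c j)).rank = r₃ := by
    obtain ⟨m₁, m₂, m₃, x, y, z, h⟩ := hatt3
    exact ⟨Fin m₃, Fin m₁ × Fin m₂, inferInstance, inferInstance, z,
      fun pp => (x pp.1, y pp.2), h⟩
  obtain ⟨u₃, g₃, M₃, hb₃, h₃⟩ := my_key (fun (v : Zf) (b : Xf × Yf) => f b.1 b.2 v) M
    (fun a b => hM b.1 b.2 a) r₃ hle3 hatt3'
  refine ⟨fun a b c => f (u₁ a) (u₂ b) (u₃ c), g₁, g₂, g₃, ⟨M₁, hb₁⟩, ⟨M₂, hb₂⟩, ⟨M₃, hb₃⟩, ?_⟩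
  intro v₁ v₂ v₃
  have e₁ : f v₁ v₂ v₃ = ∑ a, g₁ v₁ a * f (u₁ a) v₂ v₃ := h₁ v₁ (v₂, v₃)
  rw [e₁]
  refine Finset.sum_congr rfl fun a _ => ?_
  have e₂ : f (u₁ a) v₂ v₃ = ∑ b, g₂ v₂ b * f (u₁ a) (u₂ b) v₃ := h₂ v₂ (u₁ a, v₃)
  rw [e₂, Finset.mul_sum]
  refine Finset.sum_congr rfl fun b _ => ?_
  have e₃ : f (u₁ a) (u₂ b) v₃ = ∑ c, g₃ v₃ c * f (u₁ a) (u₂ b) (u₃ c) := h₃ v₃ (u₁ a, u₂ b)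
  rw [e₃, Finset.mul_sum, Finset.mul_sum]
  refine Finset.sum_congr rfl fun c _ => ?_
  ring
end

section
/- Let f be a bounded tensor function and suppose X ∈ S[f] attains sup rank of mode-1 unfolding r₁, sampled at coordinates (x^X, y^X, z^X). Form concatenated coordinate vectors x, y, z containing the coordinates of three tensors attaining the suprema in each mode, and let T be the tensor sampled from f at (x,y,z). Then rank(T^{(i)}) = rᵢ for all i = 1,2,3, i.e., a single sampled tensor simultaneously attains the F-rank in all three modes. -/
open Matrix

lemma rank_submatrix_le_general {m n m' n' : Type*} [Fintype m] [Fintype n]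
    [Fintype m'] [Fintype n'] (A : Matrix m n ℝ) (r : m' → m) (c : n' → n) :
    (A.submatrix r c).rank ≤ A.rank := by
  have h1 : (A.submatrix r id).rank ≤ A.rank := by
    rw [Matrix.rank_eq_finrank_span_row, Matrix.rank_eq_finrank_span_row]
    apply Submodule.finrank_mono
    apply Submodule.span_mono
    rintro _ ⟨i, rfl⟩
    exact ⟨r i, rfl⟩
  have h2 : ((A.submatrix r id).submatrix id c).rank ≤ (A.submatrix r id).rank := by
    rw [Matrix.rank_eq_finrank_span_cols, Matrix.rank_eq_finrank_span_cols]
    apply Submodule.finrank_mono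
    apply Submodule.span_mono
    rintro _ ⟨j, rfl⟩
    exact ⟨c j, rfl⟩
  calc (A.submatrix r c).rank = ((A.submatrix r id).submatrix id c).rank := by
        rw [Matrix.submatrix_submatrix]; rfl
    _ ≤ _ := h2.trans h1

/-- concatenating the coordinates of tensors attaining the F-rank
    in each mode yields a single sampled tensor attaining the F-rank in all modes. -/
theorem single_tensor_attains_all_modes (Xf Yf Zf : Set ℝ) (f : Xf → Yf → Zf → ℝ)
    (hbound : ∃ M : ℝ, ∀ a b c, |f a b c| ≤ M)
    (r₁ r₂ r₃ : ℕ)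
    (hsup1 : ∀ (m₁ m₂ m₃ : ℕ) (x : Fin m₁ → Xf) (y : Fin m₂ → Yf) (z : Fin m₃ → Zf),
      Matrix.rank (Matrix.of fun i (p : Fin m₂ × Fin m₃) => f (x i) (y p.1) (z p.2)) ≤ r₁)
    (hsup2 : ∀ (m₁ m₂ m₃ : ℕ) (x : Fin m₁ → Xf) (y : Fin m₂ → Yf) (z : Fin m₃ → Zf),
      Matrix.rank (Matrix.of fun j (p : Fin m₁ × Fin m₃) => f (x p.1) (y j) (z p.2)) ≤ r₂)
    (hsup3 : ∀ (m₁ m₂ m₃ : ℕ) (x : Fin m₁ → Xf) (y : Fin m₂ → Yf) (z : Fin m₃ → Zf),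
      Matrix.rank (Matrix.of fun k (p : Fin m₁ × Fin m₂) => f (x p.1) (y p.2) (z k)) ≤ r₃)
    {a₁ a₂ a₃ b₁ b₂ b₃ c₁ c₂ c₃ : ℕ}
    (x1 : Fin a₁ → Xf) (y1 : Fin a₂ → Yf) (z1 : Fin a₃ → Zf)
    (x2 : Fin b₁ → Xf) (y2 : Fin b₂ → Yf) (z2 : Fin b₃ → Zf)
    (x3 : Fin c₁ → Xf) (y3 : Fin c₂ → Yf) (z3 : Fin c₃ → Zf)
    (hatt1 : Matrix.rank
      (Matrix.of fun i (p : Fin a₂ × Fin a₃) => f (x1 i) (y1 p.1) (z1 p.2)) = r₁)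
    (hatt2 : Matrix.rank
      (Matrix.of fun j (p : Fin b₁ × Fin b₃) => f (x2 p.1) (y2 j) (z2 p.2)) = r₂)
    (hatt3 : Matrix.rank
      (Matrix.of fun k (p : Fin c₁ × Fin c₂) => f (x3 p.1) (y3 p.2) (z3 k)) = r₃)
    (xcat : Fin a₁ ⊕ Fin b₁ ⊕ Fin c₁ → Xf)
    (ycat : Fin a₂ ⊕ Fin b₂ ⊕ Fin c₂ → Yf)
    (zcat : Fin a₃ ⊕ Fin b₃ ⊕ Fin c₃ → Zf)
    (hxc : xcat = Sum.elim x1 (Sum.elim x2 x3))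
    (hyc : ycat = Sum.elim y1 (Sum.elim y2 y3))
    (hzc : zcat = Sum.elim z1 (Sum.elim z2 z3))
    (T : (Fin a₁ ⊕ Fin b₁ ⊕ Fin c₁) → (Fin a₂ ⊕ Fin b₂ ⊕ Fin c₂) →
      (Fin a₃ ⊕ Fin b₃ ⊕ Fin c₃) → ℝ)
    (hT : ∀ i j k, T i j k = f (xcat i) (ycat j) (zcat k)) :
    Matrix.rank (Matrix.of fun i (p : (Fin a₂ ⊕ Fin b₂ ⊕ Fin c₂) ×
        (Fin a₃ ⊕ Fin b₃ ⊕ Fin c₃)) => T i p.1 p.2) = r₁ ∧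
    Matrix.rank (Matrix.of fun j (p : (Fin a₁ ⊕ Fin b₁ ⊕ Fin c₁) ×
        (Fin a₃ ⊕ Fin b₃ ⊕ Fin c₃)) => T p.1 j p.2) = r₂ ∧
    Matrix.rank (Matrix.of fun k (p : (Fin a₁ ⊕ Fin b₁ ⊕ Fin c₁) ×
        (Fin a₂ ⊕ Fin b₂ ⊕ Fin c₂)) => T p.1 p.2 k) = r₃ := by
  -- equivalences to Fin types
  let e1 : (Fin a₁ ⊕ Fin b₁ ⊕ Fin c₁) ≃ Fin (a₁ + (b₁ + c₁)) :=
    (Equiv.sumCongr (Equiv.refl _) finSumFinEquiv).trans finSumFinEquiv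
  let e2 : (Fin a₂ ⊕ Fin b₂ ⊕ Fin c₂) ≃ Fin (a₂ + (b₂ + c₂)) :=
    (Equiv.sumCongr (Equiv.refl _) finSumFinEquiv).trans finSumFinEquiv
  let e3 : (Fin a₃ ⊕ Fin b₃ ⊕ Fin c₃) ≃ Fin (a₃ + (b₃ + c₃)) :=
    (Equiv.sumCongr (Equiv.refl _) finSumFinEquiv).trans finSumFinEquiv
  refine ⟨?_, ?_, ?_⟩
  · apply le_antisymm
    · have h := hsup1 _ _ _ (xcat ∘ e1.symm) (ycat ∘ e2.symm) (zcat ∘ e3.symm)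
      refine le_trans (le_of_eq ?_) ((rank_submatrix_le_general _ e1
        (fun p : (Fin a₂ ⊕ Fin b₂ ⊕ Fin c₂) × (Fin a₃ ⊕ Fin b₃ ⊕ Fin c₃) => (e2 p.1, e3 p.2))).trans h)
      congr 1
      ext i p
      simp [Matrix.submatrix, hT]
    · rw [← hatt1]
      have : (Matrix.of fun i (p : Fin a₂ × Fin a₃) => f (x1 i) (y1 p.1) (z1 p.2)) =
          (Matrix.of fun i (p : (Fin a₂ ⊕ Fin b₂ ⊕ Fin c₂) ×
            (Fin a₃ ⊕ Fin b₃ ⊕ Fin c₃)) => T i p.1 p.2).submatrix Sum.inl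
            (fun p => (Sum.inl p.1, Sum.inl p.2)) := by
        ext i p
        simp [Matrix.submatrix, hT, hxc, hyc, hzc]
      rw [this]
      exact rank_submatrix_le_general _ _ _
  · apply le_antisymm
    · have h := hsup2 _ _ _ (xcat ∘ e1.symm) (ycat ∘ e2.symm) (zcat ∘ e3.symm)
      refine le_trans (le_of_eq ?_) ((rank_submatrix_le_general _ e2
        (fun p : (Fin a₁ ⊕ Fin b₁ ⊕ Fin c₁) × (Fin a₃ ⊕ Fin b₃ ⊕ Fin c₃) => (e1 p.1, e3 p.2))).trans h)
      congr 1
      ext j p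
      simp [Matrix.submatrix, hT]
    · rw [← hatt2]
      have : (Matrix.of fun j (p : Fin b₁ × Fin b₃) => f (x2 p.1) (y2 j) (z2 p.2)) =
          (Matrix.of fun j (p : (Fin a₁ ⊕ Fin b₁ ⊕ Fin c₁) ×
            (Fin a₃ ⊕ Fin b₃ ⊕ Fin c₃)) => T p.1 j p.2).submatrix (Sum.inr ∘ Sum.inl)
            (fun p => (Sum.inr (Sum.inl p.1), Sum.inr (Sum.inl p.2))) := by
        ext j p
        simp [Matrix.submatrix, hT, hxc, hyc, hzc]
      rw [this]
      exact rank_submatrix_le_general _ _ _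
  · apply le_antisymm
    · have h := hsup3 _ _ _ (xcat ∘ e1.symm) (ycat ∘ e2.symm) (zcat ∘ e3.symm)
      refine le_trans (le_of_eq ?_) ((rank_submatrix_le_general _ e3
        (fun p : (Fin a₁ ⊕ Fin b₁ ⊕ Fin c₁) × (Fin a₂ ⊕ Fin b₂ ⊕ Fin c₂) => (e1 p.1, e2 p.2))).trans h)
      congr 1
      ext k p
      simp [Matrix.submatrix, hT]
    · rw [← hatt3]
      have : (Matrix.of fun k (p : Fin c₁ × Fin c₂) => f (x3 p.1) (y3 p.2) (z3 k)) =
          (Matrix.of fun k (p : (Fin a₁ ⊕ Fin b₁ ⊕ Fin c₁) ×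
            (Fin a₂ ⊕ Fin b₂ ⊕ Fin c₂)) => T p.1 p.2 k).submatrix (Sum.inr ∘ Sum.inr)
            (fun p => (Sum.inr (Sum.inr p.1), Sum.inr (Sum.inr p.2))) := by
        ext k p
        simp [Matrix.submatrix, hT, hxc, hyc, hzc]
      rw [this]
      exact rank_submatrix_le_general _ _ _
end
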